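/- For all x > 0, (sinh x)/x > ((28/51) + (23/51)·(cosh x)^{34/35})^{35/46}. -/

import Mathlib

open Real Set Filter Topology
open scoped Nat




/-- helper: F 0 = 0, F' > 0 on positives ⇒ F > 0 on positives -/
lemma pos_of_deriv_pos (F F' : ℝ → ℝ) (h0 : F 0 = 0)
    (hd : ∀ t, HasDerivAt F (F' t) t) (hp : ∀ t, 0 < t → 0 < F' t) :
    ∀ x, 0 < x → 0 < F x := by
  intro x hx
  have hmono : StrictMonoOn F (Ici 0) := by
    apply strictMonoOn_of_deriv_pos (convex_Ici 0)
    · exact fun t _ => ((hd t).differentiableAt.continuousAt).continuousWithinAt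
    · intro t ht
      rw [interior_Ici] at ht
      rw [(hd t).deriv]
      exact hp t ht
  have := hmono (self_mem_Ici) (le_of_lt hx : (0:ℝ) ≤ x) hx
  rwa [h0] at this

lemma xcosh_sub_sinh_pos {x : ℝ} (hx : 0 < x) : 0 < x * Real.cosh x - Real.sinh x := by
  apply pos_of_deriv_pos (fun t => t * Real.cosh t - Real.sinh t) (fun t => t * Real.sinh t)
  · simp
  · intro t
    have h1 : HasDerivAt (fun t : ℝ => t * Real.cosh t) (1 * Real.cosh t + t * Real.sinh t) t :=
      (hasDerivAt_id t).mul (Real.hasDerivAt_cosh t)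
    have := h1.sub (Real.hasDerivAt_sinh t)
    exact this.congr_deriv (by ring)
  · intro t ht
    exact mul_pos ht (Real.sinh_pos_iff.2 ht)
  · exact hx

lemma xcosh_sub_sinh_ge {x : ℝ} (hx : 0 < x) : x^3/3 ≤ x * Real.cosh x - Real.sinh x := by
  rw [← sub_nonneg]
  have := pos_of_deriv_pos (fun t => t * Real.cosh t - Real.sinh t - t^3/3)
      (fun t => t * (Real.sinh t - t)) (by simp)
      (fun t => by
        have h1 : HasDerivAt (fun t : ℝ => t * Real.cosh t) (1 * Real.cosh t + t * Real.sinh t) t :=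
          (hasDerivAt_id t).mul (Real.hasDerivAt_cosh t)
        have h2 : HasDerivAt (fun t : ℝ => t^3/3) (3 * t^2 / 3) t := by
          exact ((hasDerivAt_pow 3 t).div_const 3).congr_deriv (by push_cast; ring)
        have := (h1.sub (Real.hasDerivAt_sinh t)).sub h2
        exact this.congr_deriv (by ring))
      (fun t ht => mul_pos ht (by linarith [Real.self_lt_sinh_iff.2 ht])) x hx
  linarith

lemma xcosh_sub_sinh_le {x : ℝ} (hx : 0 < x) : x * Real.cosh x - Real.sinh x ≤ x^3 * Real.cosh x / 3 := by
  rw [← sub_nonneg]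
  have := pos_of_deriv_pos (fun t => t^3 * Real.cosh t / 3 - (t * Real.cosh t - Real.sinh t))
      (fun t => (t * (t * Real.cosh t - Real.sinh t) + t^3 * Real.sinh t / 3)) (by simp)
      (fun t => by
        have h1 : HasDerivAt (fun t : ℝ => t^3 * Real.cosh t / 3)
            ((((3:ℕ) * t^2) * Real.cosh t + t^3 * Real.sinh t)/3) t :=
          ((hasDerivAt_pow 3 t).mul (Real.hasDerivAt_cosh t)).div_const 3
        have h2 : HasDerivAt (fun t : ℝ => t * Real.cosh t) (1 * Real.cosh t + t * Real.sinh t) t :=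
          (hasDerivAt_id t).mul (Real.hasDerivAt_cosh t)
        have := h1.sub (h2.sub (Real.hasDerivAt_sinh t))
        exact this.congr_deriv (by push_cast; ring))
      (fun t ht => by
        have h3 := xcosh_sub_sinh_pos ht
        have h4 : 0 < Real.sinh t := Real.sinh_pos_iff.2 ht
        positivity) x hx
  linarith






lemma key_coeff (n : ℕ) :
    (432*(n:ℝ)^2 + 756*n + 405) ≤ 9^n * (48*(n:ℝ)^2 - 276*n + 405) := by
  rcases le_or_gt n 5 with hn | hn
  · interval_cases n <;> norm_num
  · have hn6 : (6:ℝ) ≤ (n:ℝ) := by exact_mod_cast hn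
    have h9 : (9:ℝ)^6 ≤ 9^n := pow_le_pow_right₀ (by norm_num) (by omega)
    have hB : 2*(n:ℝ)^2 ≤ 48*(n:ℝ)^2 - 276*n + 405 := by nlinarith
    have hA : (531441:ℝ) * (2*(n:ℝ)^2) ≤ 9^n * (48*(n:ℝ)^2 - 276*n + 405) := by
      have : (531441:ℝ) ≤ 9^n := by norm_num at h9 ⊢; linarith
      have h2 : (0:ℝ) ≤ 2*(n:ℝ)^2 := by positivity
      nlinarith
    nlinarith

noncomputable def NN (x : ℝ) : ℝ :=
  12*x^2*Real.cosh (3*x) - 108*x^2*Real.cosh x - 58*x*Real.sinh (3*x) - 54*x*Real.sinh x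
    + 81*Real.cosh (3*x) - 81*Real.cosh x

/-- the general term of the series of NN -/
noncomputable def NNterm (x : ℝ) (n : ℕ) : ℝ :=
  (9^n * (48*(n:ℝ)^2 - 276*n + 405) - (432*(n:ℝ)^2 + 756*n + 405))
    * x^(2*n+2) / (2*n+2)!

lemma NN_hasSum {x : ℝ} : HasSum (NNterm x) (NN x) := by
  have hc3 := Real.hasSum_cosh (3*x)
  have hc1 := Real.hasSum_cosh x
  have hs3 := Real.hasSum_sinh (3*x)
  have hs1 := Real.hasSum_sinh x
  -- shifted series for 81*(cosh 3x - cosh x)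
  have h5 : HasSum (fun n => 81*((3*x)^(2*n)/(2*n)! - x^(2*n)/(2*n)!))
      (81*(Real.cosh (3*x) - Real.cosh x)) := (hc3.sub hc1).mul_left 81
  have h5' : HasSum (fun n => 81*((3*x)^(2*(n+1))/(2*(n+1))! - x^(2*(n+1))/(2*(n+1))!))
      (81*(Real.cosh (3*x) - Real.cosh x)) := by
    apply (hasSum_nat_add_iff (f := fun n => 81*((3*x)^(2*n)/(2*n)! - x^(2*n)/(2*n)!)) 1).mpr
    convert h5 using 1
    · rfl
    simp
  have h1 : HasSum (fun n => 12*x^2*((3*x)^(2*n)/(2*n)!)) (12*x^2*Real.cosh (3*x)) :=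
    hc3.mul_left _
  have h2 : HasSum (fun n => 108*x^2*(x^(2*n)/(2*n)!)) (108*x^2*Real.cosh x) := hc1.mul_left _
  have h3 : HasSum (fun n => 58*x*((3*x)^(2*n+1)/(2*n+1)!)) (58*x*Real.sinh (3*x)) :=
    hs3.mul_left _
  have h4 : HasSum (fun n => 54*x*(x^(2*n+1)/(2*n+1)!)) (54*x*Real.sinh x) := hs1.mul_left _
  have htot := (((h1.sub h2).sub h3).sub h4).add h5'
  have : NN x = 12*x^2*Real.cosh (3*x) - 108*x^2*Real.cosh x - 58*x*Real.sinh (3*x)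
      - 54*x*Real.sinh x + 81*(Real.cosh (3*x) - Real.cosh x) := by unfold NN; ring
  rw [this]
  convert htot using 2 with n
  · rfl
  unfold NNterm
  have e1 : ((2*n+1)! : ℝ) = (2*n+1) * (2*n)! := by
    rw [Nat.factorial_succ]; push_cast; ring
  have e2 : ((2*(n+1))! : ℝ) = (2*n+2) * ((2*n+1) * (2*n)!) := by
    rw [show 2*(n+1) = (2*n+1)+1 from by ring, Nat.factorial_succ, Nat.factorial_succ]
    push_cast; ring
  have e3 : ((2*n+2)! : ℝ) = (2*n+2) * ((2*n+1) * (2*n)!) := by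
    rw [show 2*n+2 = (2*n+1)+1 from by ring, Nat.factorial_succ, Nat.factorial_succ]
    push_cast; ring
  have hf0 : ((2*n)! : ℝ) ≠ 0 := by positivity
  have hp1 : (3*x)^(2*n) = 9^n * x^(2*n) := by
    rw [mul_pow, pow_mul]; norm_num
  have h3p : (3:ℝ)^(2*n+1) = 3 * 9^n := by
    rw [pow_succ, pow_mul]; norm_num [mul_comm]
  have hp2 : (3*x)^(2*n+1) = 3 * 9^n * x^(2*n+1) := by
    rw [mul_pow, h3p]
  have hp3 : (3*x)^(2*(n+1)) = 9^(n+1) * x^(2*(n+1)) := by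
    rw [mul_pow, pow_mul]; norm_num
  rw [hp1, hp2, hp3, e1, e2, e3]
  have h2n1 : ((2*n+1):ℝ) ≠ 0 := by positivity
  have h2n2 : ((2*n+2):ℝ) ≠ 0 := by positivity
  field_simp
  push_cast
  ring

lemma NNterm_nonneg {x : ℝ} (n : ℕ) : 0 ≤ NNterm x n := by
  unfold NNterm
  have h := key_coeff n
  have : (0:ℝ) ≤ 9^n * (48*(n:ℝ)^2 - 276*n + 405) - (432*(n:ℝ)^2 + 756*n + 405) := by linarith
  have hx : (0:ℝ) ≤ x^(2*n+2) := by
    have : x^(2*n+2) = (x^(n+1))^2 := by rw [← pow_mul]; ring_nf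
    rw [this]; positivity
  positivity

lemma NN_pos {x : ℝ} (hx : 0 < x) : 0 < NN x := by
  have h4 : NNterm x 4 ≤ NN x := le_hasSum NN_hasSum 4 (fun j _ => NNterm_nonneg j)
  have : 0 < NNterm x 4 := by
    unfold NNterm
    norm_num [Nat.factorial]
    positivity
  linarith








noncomputable def phi (x : ℝ) : ℝ :=
  (23/17) * ((Real.sinh x / x)^((11:ℝ)/35) * ((Real.cosh x)^((1:ℝ)/35)
    * ((x*Real.cosh x - Real.sinh x)/(x^2*Real.sinh x))))

noncomputable def psi (x : ℝ) : ℝ :=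
  (11/35)*Real.log (Real.sinh x / x) + (1/35)*Real.log (Real.cosh x)
    + Real.log (x*Real.cosh x - Real.sinh x) - 2*Real.log x - Real.log (Real.sinh x)

noncomputable def fF (x : ℝ) : ℝ := (Real.sinh x / x)^((46:ℝ)/35)
noncomputable def gG (x : ℝ) : ℝ := (Real.cosh x)^((34:ℝ)/35)

lemma NN_eq (x : ℝ) : NN x = 4*(35*x^2*(Real.sinh x)^2*Real.cosh x
    + x*(Real.sinh x)^2*(x*Real.cosh x - Real.sinh x)
    - 24*x*(Real.cosh x)^2*(x*Real.cosh x - Real.sinh x)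
    - 81*Real.sinh x*Real.cosh x*(x*Real.cosh x - Real.sinh x)) := by
  unfold NN
  rw [Real.cosh_three_mul, Real.sinh_three_mul]
  linear_combination (144*x^2*Real.cosh x + 228*x*Real.sinh x + 324*Real.cosh x) * Real.cosh_sq x

lemma phi_eq_exp_psi {x : ℝ} (hx : 0 < x) : phi x = (23/17) * Real.exp (psi x) := by
  have hs : 0 < Real.sinh x := Real.sinh_pos_iff.2 hx
  have hc : 0 < Real.cosh x := Real.cosh_pos x
  have hq : 0 < x * Real.cosh x - Real.sinh x := xcosh_sub_sinh_pos hx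
  have hsx : 0 < Real.sinh x / x := div_pos hs hx
  unfold phi psi
  rw [Real.exp_sub, Real.exp_sub, Real.exp_add, Real.exp_add, Real.exp_log hq, Real.exp_log hs]
  have e1 : Real.exp ((11/35)*Real.log (Real.sinh x / x)) = (Real.sinh x / x)^((11:ℝ)/35) := by
    rw [mul_comm, ← Real.rpow_def_of_pos hsx]
  have e2 : Real.exp ((1/35)*Real.log (Real.cosh x)) = (Real.cosh x)^((1:ℝ)/35) := by
    rw [mul_comm, ← Real.rpow_def_of_pos hc]
  have e3 : Real.exp (2*Real.log x) = x^2 := by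
    rw [mul_comm, ← Real.rpow_def_of_pos hx, ← Real.rpow_natCast x 2]
    norm_num
  rw [e1, e2, e3]
  field_simp

lemma hasDerivAt_psi {x : ℝ} (hx : 0 < x) :
    HasDerivAt psi (NN x / (140 * x * Real.sinh x * Real.cosh x
      * (x * Real.cosh x - Real.sinh x))) x := by
  have hs : 0 < Real.sinh x := Real.sinh_pos_iff.2 hx
  have hc : 0 < Real.cosh x := Real.cosh_pos x
  have hq : 0 < x * Real.cosh x - Real.sinh x := xcosh_sub_sinh_pos hx
  have hsx : 0 < Real.sinh x / x := div_pos hs hx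
  have h1 : HasDerivAt (fun y => Real.log (Real.sinh y / y))
      (((Real.cosh x * x - Real.sinh x * 1)/x^2) / (Real.sinh x / x)) x :=
    ((Real.hasDerivAt_sinh x).div (hasDerivAt_id x) hx.ne').log hsx.ne'
  have h2 : HasDerivAt (fun y => Real.log (Real.cosh y)) (Real.sinh x / Real.cosh x) x :=
    (Real.hasDerivAt_cosh x).log hc.ne'
  have h3 : HasDerivAt (fun y => Real.log (y * Real.cosh y - Real.sinh y))
      ((1 * Real.cosh x + x * Real.sinh x - Real.cosh x) / (x * Real.cosh x - Real.sinh x)) x :=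
    (((hasDerivAt_id x).mul (Real.hasDerivAt_cosh x)).sub (Real.hasDerivAt_sinh x)).log hq.ne'
  have h4 : HasDerivAt (fun y => 2 * Real.log y) (2 * x⁻¹) x :=
    (Real.hasDerivAt_log hx.ne').const_mul 2
  have h5 : HasDerivAt (fun y => Real.log (Real.sinh y)) (Real.cosh x / Real.sinh x) x :=
    (Real.hasDerivAt_sinh x).log hs.ne'
  have htot := ((((h1.const_mul ((11:ℝ)/35)).add (h2.const_mul ((1:ℝ)/35))).add h3).sub h4).sub h5
  have : psi = fun y => (11/35)*Real.log (Real.sinh y / y) + (1/35)*Real.log (Real.cosh y)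
      + Real.log (y * Real.cosh y - Real.sinh y) - 2*Real.log y - Real.log (Real.sinh y) := rfl
  rw [this]
  convert htot using 1
  · rfl
  · rfl
  · rfl
  rw [NN_eq]
  field_simp
  ring

lemma psi_strictMonoOn : StrictMonoOn psi (Ioi (0:ℝ)) := by
  apply strictMonoOn_of_deriv_pos (convex_Ioi 0)
  · exact fun t ht => ((hasDerivAt_psi ht).differentiableAt.continuousAt).continuousWithinAt
  · intro t ht
    rw [interior_Ioi] at ht
    rw [(hasDerivAt_psi ht).deriv]
    have hs : 0 < Real.sinh t := Real.sinh_pos_iff.2 ht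
    have hc : 0 < Real.cosh t := Real.cosh_pos t
    have hq : 0 < t * Real.cosh t - Real.sinh t := xcosh_sub_sinh_pos ht
    have hN := NN_pos ht
    refine div_pos hN ?_
    have h140 : (0:ℝ) < 140 := by norm_num
    exact mul_pos (mul_pos (mul_pos (mul_pos h140 ht) hs) hc) hq

lemma phi_strictMonoOn : StrictMonoOn phi (Ioi (0:ℝ)) := by
  intro a ha b hb hab
  rw [phi_eq_exp_psi ha, phi_eq_exp_psi hb]
  have := psi_strictMonoOn ha hb hab
  have h23 : (0:ℝ) < 23/17 := by norm_num
  exact mul_lt_mul_of_pos_left (Real.exp_lt_exp.2 this) h23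








noncomputable def fF' (x : ℝ) : ℝ :=
  ((Real.cosh x * x - Real.sinh x * 1)/x^2) * ((46:ℝ)/35) * (Real.sinh x / x)^((46:ℝ)/35 - 1)
noncomputable def gG' (x : ℝ) : ℝ :=
  Real.sinh x * ((34:ℝ)/35) * (Real.cosh x)^((34:ℝ)/35 - 1)

lemma hasDerivAt_fF {x : ℝ} (hx : 0 < x) : HasDerivAt fF (fF' x) x := by
  have hs : 0 < Real.sinh x := Real.sinh_pos_iff.2 hx
  have hsx : 0 < Real.sinh x / x := div_pos hs hx
  exact ((Real.hasDerivAt_sinh x).div (hasDerivAt_id x) hx.ne').rpow_const (Or.inl hsx.ne')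

lemma hasDerivAt_gG (x : ℝ) : HasDerivAt gG (gG' x) x :=
  (Real.hasDerivAt_cosh x).rpow_const (Or.inl (Real.cosh_pos x).ne')

lemma gG'_pos {x : ℝ} (hx : 0 < x) : 0 < gG' x := by
  have hs : 0 < Real.sinh x := Real.sinh_pos_iff.2 hx
  have hc : 0 < Real.cosh x := Real.cosh_pos x
  unfold gG'
  have := Real.rpow_pos_of_pos hc ((34:ℝ)/35 - 1)
  positivity

lemma fF'_eq_phi_mul_gG' {x : ℝ} (hx : 0 < x) : fF' x = phi x * gG' x := by
  have hs : 0 < Real.sinh x := Real.sinh_pos_iff.2 hx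
  have hc : 0 < Real.cosh x := Real.cosh_pos x
  have hsx : 0 < Real.sinh x / x := div_pos hs hx
  unfold fF' gG' phi
  have e1 : (46:ℝ)/35 - 1 = 11/35 := by norm_num
  have e2 : (34:ℝ)/35 - 1 = -(1/35) := by norm_num
  have e4 : ((1:ℝ)/35) = (1:ℝ)/35 := rfl
  rw [e1, e2, Real.rpow_neg hc.le]
  have hcp : (0:ℝ) < (Real.cosh x)^((1:ℝ)/35) := Real.rpow_pos_of_pos hc _
  field_simp
  ring

lemma lim_sinh_div : Tendsto (fun y => Real.sinh y / y) (𝓝[>](0:ℝ)) (𝓝 1) := by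
  have h := hasDerivAt_iff_tendsto_slope.1 (Real.hasDerivAt_sinh 0)
  rw [Real.cosh_zero] at h
  have h' : Tendsto (slope Real.sinh 0) (𝓝[>](0:ℝ)) (𝓝 1) :=
    h.mono_left (nhdsWithin_mono 0 (fun y hy => ne_of_gt hy))
  refine h'.congr (fun y => ?_)
  rw [slope_def_field, Real.sinh_zero, sub_zero, sub_zero]

lemma lim_rpow_one {p : ℝ} {F : ℝ → ℝ} (h : Tendsto F (𝓝[>](0:ℝ)) (𝓝 1)) :
    Tendsto (fun y => (F y)^p) (𝓝[>](0:ℝ)) (𝓝 1) := by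
  have cont : ContinuousAt (fun z : ℝ => z^p) 1 :=
    Real.continuousAt_rpow_const 1 p (Or.inl one_ne_zero)
  have := cont.tendsto.comp h
  simpa [Real.one_rpow, Function.comp_def] using this

lemma lim_cosh : Tendsto (fun y => Real.cosh y) (𝓝[>](0:ℝ)) (𝓝 1) := by
  have h : Tendsto Real.cosh (𝓝[>](0:ℝ)) (𝓝 (Real.cosh 0)) :=
    (Real.continuous_cosh.tendsto 0).mono_left nhdsWithin_le_nhds
  simpa using h

lemma lim_ratio : Tendsto (fun y => (y*Real.cosh y - Real.sinh y)/(y^2*Real.sinh y))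
    (𝓝[>](0:ℝ)) (𝓝 (1/3)) := by
  have hlow : Tendsto (fun y => (3*Real.cosh y)⁻¹) (𝓝[>](0:ℝ)) (𝓝 ((3:ℝ)⁻¹)) := by
    have := (lim_cosh.const_mul (3:ℝ)).inv₀ (by norm_num)
    simpa using this
  have hup : Tendsto (fun y => Real.cosh y/3) (𝓝[>](0:ℝ)) (𝓝 (1/3)) := by
    have := lim_cosh.div_const (3:ℝ)
    simpa using this
  have hlow' : Tendsto (fun y => (3*Real.cosh y)⁻¹) (𝓝[>](0:ℝ)) (𝓝 (1/3)) := by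
    convert hlow using 2
    norm_num
  apply tendsto_of_tendsto_of_tendsto_of_le_of_le' hlow' hup
  · filter_upwards [self_mem_nhdsWithin] with y hy
    have hy : (0:ℝ) < y := hy
    have hs : 0 < Real.sinh y := Real.sinh_pos_iff.2 hy
    have hc : 0 < Real.cosh y := Real.cosh_pos y
    have hq : 0 < y * Real.cosh y - Real.sinh y := xcosh_sub_sinh_pos hy
    have hsc : Real.sinh y ≤ y * Real.cosh y := by linarith
    have e : (3*Real.cosh y)⁻¹ = (y^3/3)/(y^3*Real.cosh y) := by
      field_simp
    rw [e]
    apply div_le_div₀ hq.le (xcosh_sub_sinh_ge hy) (by positivity)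
    calc y^2*Real.sinh y ≤ y^2*(y*Real.cosh y) := by nlinarith
      _ = y^3*Real.cosh y := by ring
  · filter_upwards [self_mem_nhdsWithin] with y hy
    have hy : (0:ℝ) < y := hy
    have hs : 0 < Real.sinh y := Real.sinh_pos_iff.2 hy
    have hc : 0 < Real.cosh y := Real.cosh_pos y
    have hq : 0 < y * Real.cosh y - Real.sinh y := xcosh_sub_sinh_pos hy
    have hys : y ≤ Real.sinh y := (Real.self_le_sinh_iff).2 hy.le
    have e : Real.cosh y/3 = (y^3*Real.cosh y/3)/(y^3) := by
      field_simp
    rw [e]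
    apply div_le_div₀ (by positivity) (xcosh_sub_sinh_le hy) (by positivity)
    nlinarith

lemma lim_phi : Tendsto phi (𝓝[>](0:ℝ)) (𝓝 (23/51)) := by
  have h := ((lim_rpow_one (p := (11:ℝ)/35) lim_sinh_div).mul
    ((lim_rpow_one (p := (1:ℝ)/35) lim_cosh).mul lim_ratio)).const_mul ((23:ℝ)/17)
  rw [show (23:ℝ)/51 = 23/17*(1*(1*(1/3))) from by norm_num]
  exact h

lemma lim_fF : Tendsto fF (𝓝[>](0:ℝ)) (𝓝 1) := lim_rpow_one lim_sinh_div
lemma lim_gG : Tendsto gG (𝓝[>](0:ℝ)) (𝓝 1) := lim_rpow_one lim_cosh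

lemma phi_ge {z : ℝ} (hz : 0 < z) : 23/51 ≤ phi z := by
  apply le_of_tendsto lim_phi
  filter_upwards [Ioo_mem_nhdsGT_of_mem (Set.left_mem_Ico.2 hz)] with y hy
  exact (phi_strictMonoOn hy.1 hz hy.2).le

lemma phi_gt {z : ℝ} (hz : 0 < z) : 23/51 < phi z := by
  have h2 : (0:ℝ) < z/2 := by linarith
  calc (23:ℝ)/51 ≤ phi (z/2) := phi_ge h2
    _ < phi z := phi_strictMonoOn h2 hz (by linarith)

lemma step {y x : ℝ} (hy : 0 < y) (hyx : y < x) :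
    (23/51)*(gG x - gG y) < fF x - fF y := by
  have hgmono : gG y < gG x := by
    unfold gG
    apply Real.rpow_lt_rpow (Real.cosh_pos y).le _ (by norm_num)
    rw [Real.cosh_lt_cosh]
    rw [abs_of_pos hy, abs_of_pos (lt_trans hy hyx)]
    exact hyx
  obtain ⟨ξ, hξ, hMVT⟩ := exists_ratio_hasDerivAt_eq_ratio_slope fF fF' hyx
    (fun t ht => ((hasDerivAt_fF (lt_of_lt_of_le hy ht.1)).differentiableAt.continuousAt).continuousWithinAt)
    (fun t ht => hasDerivAt_fF (lt_trans hy ht.1))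
    gG gG'
    (fun t ht => ((hasDerivAt_gG t).differentiableAt.continuousAt).continuousWithinAt)
    (fun t ht => hasDerivAt_gG t)
  have hξ0 : 0 < ξ := lt_trans hy hξ.1
  have hg' : 0 < gG' ξ := gG'_pos hξ0
  rw [fF'_eq_phi_mul_gG' hξ0] at hMVT
  have hkey : fF x - fF y = phi ξ * (gG x - gG y) := by
    apply mul_right_cancel₀ hg'.ne'
    rw [← hMVT]
    ring
  rw [hkey]
  have := phi_gt hξ0
  have hgd : 0 < gG x - gG y := by linarith
  nlinarith

lemma nonstrict {x : ℝ} (hx : 0 < x) : (23/51)*(gG x - 1) ≤ fF x - 1 := by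
  have hlim1 : Tendsto (fun y => (23/51)*(gG x - gG y)) (𝓝[>](0:ℝ)) (𝓝 ((23/51)*(gG x - 1))) :=
    ((tendsto_const_nhds.sub lim_gG).const_mul _)
  have hlim2 : Tendsto (fun y => fF x - fF y) (𝓝[>](0:ℝ)) (𝓝 (fF x - 1)) :=
    tendsto_const_nhds.sub lim_fF
  apply le_of_tendsto_of_tendsto hlim1 hlim2
  filter_upwards [Ioo_mem_nhdsGT_of_mem (Set.left_mem_Ico.2 hx)] with y hy
  exact (step hy.1 hy.2).le

lemma main_ineq {x : ℝ} (hx : 0 < x) : 28/51 + (23/51)*gG x < fF x := by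
  have h2 : 0 < x/2 := by linarith
  have hstep := step h2 (by linarith : x/2 < x)
  have hns := nonstrict h2
  linarith

theorem stmt_18 (x : ℝ) (hx : 0 < x) :
    Real.sinh x / x > (28 / 51 + (23 / 51) * (Real.cosh x) ^ ((34 : ℝ) / 35)) ^ ((35 : ℝ) / 46) := by
  have hs : 0 < Real.sinh x := Real.sinh_pos_iff.2 hx
  have hsx : 0 < Real.sinh x / x := div_pos hs hx
  have h := main_ineq hx
  have hbase : (0:ℝ) ≤ 28 / 51 + (23 / 51) * (Real.cosh x) ^ ((34 : ℝ) / 35) := by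
    have := Real.rpow_nonneg (Real.cosh_pos x).le ((34:ℝ)/35)
    positivity
  have hlt : (28 / 51 + (23 / 51) * (Real.cosh x) ^ ((34 : ℝ) / 35)) ^ ((35 : ℝ) / 46)
      < (fF x) ^ ((35 : ℝ) / 46) := by
    apply Real.rpow_lt_rpow hbase _ (by norm_num)
    unfold gG at h
    linarith
  have heq : (fF x) ^ ((35 : ℝ) / 46) = Real.sinh x / x := by
    unfold fF
    rw [← Real.rpow_mul hsx.le]
    norm_num
  rw [heq] at hlt
  exact hlt
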